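/- Let g_1, ..., g_m ∈ ℝⁿ and let (t*, d*) be the optimal solution of minimizing t + (1/2)‖d‖² subject to g_jᵀd ≤ t for all j. Then d* = 0 if and only if 0 lies in the convex hull of {g_1, ..., g_m}. -/

import Mathlib

open scoped RealInnerProductSpace

/-- For the optimal solution `(t*, d*)` of the subproblem `SP₁(x)`, `d* = 0` if and
only if `0` lies in the convex hull of `{g_1, ..., g_m}`. -/
theorem stmt_5 {n m : ℕ} (g : Fin m → EuclideanSpace ℝ (Fin n))
    (ts : ℝ) (ds : EuclideanSpace ℝ (Fin n))
    (hfeas : ∀ j, ⟪g j, ds⟫ ≤ ts)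
    (hopt : ∀ q : ℝ × EuclideanSpace ℝ (Fin n), (∀ j, ⟪g j, q.2⟫ ≤ q.1) →
      ts + (1/2) * ‖ds‖^2 ≤ q.1 + (1/2) * ‖q.2‖^2) :
    ds = 0 ↔ (0 : EuclideanSpace ℝ (Fin n)) ∈ convexHull ℝ (Set.range g) := by
  -- dispose of the degenerate case m = 0
  rcases Nat.eq_zero_or_pos m with hm | hm
  · subst hm
    exfalso
    have h := hopt (ts - 1, ds) (fun j => j.elim0)
    simp only at h
    linarith
  obtain ⟨j0⟩ : Nonempty (Fin m) := ⟨⟨0, hm⟩⟩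
  -- key fact for the ⇐ direction: if 0 ∈ conv hull, every feasible (t,d) has t ≥ 0
  have key : (0 : EuclideanSpace ℝ (Fin n)) ∈ convexHull ℝ (Set.range g) →
      ∀ q : ℝ × EuclideanSpace ℝ (Fin n), (∀ j, ⟪g j, q.2⟫ ≤ q.1) → 0 ≤ q.1 := by
    intro h q hq
    have hlin : IsLinearMap ℝ (fun y : EuclideanSpace ℝ (Fin n) => ⟪y, q.2⟫) :=
      ⟨fun a b => inner_add_left _ _ _, fun c x => real_inner_smul_left _ _ _⟩
    have hsub : convexHull ℝ (Set.range g) ⊆ {y : EuclideanSpace ℝ (Fin n) | ⟪y, q.2⟫ ≤ q.1} := by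
      apply convexHull_min
      · rintro y ⟨j, rfl⟩
        exact hq j
      · exact convex_halfSpace_le hlin q.1
    have := hsub h
    simpa using this
  constructor
  · -- ds = 0 → 0 ∈ conv hull
    intro hds
    subst hds
    have hts0 : 0 ≤ ts := by simpa using hfeas j0
    have hts1 : ts ≤ 0 := by
      have := hopt (0, 0) (fun j => by simp)
      simpa using this
    have hts : ts = 0 := le_antisymm hts1 hts0
    by_contra h0
    obtain ⟨f, u, hf0, hfb⟩ :=
      geometric_hahn_banach_point_closed (convex_convexHull ℝ _)
        ((Set.finite_range g).isClosed_convexHull (𝕜 := ℝ)) h0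
    have hu : 0 < u := by simpa using hf0
    set v := (InnerProductSpace.toDual ℝ (EuclideanSpace ℝ (Fin n))).symm f with hv
    have hvy : ∀ y, ⟪v, y⟫ = f y := fun y =>
      InnerProductSpace.toDual_symm_apply
    have hfg : ∀ j, u < f (g j) := fun j =>
      hfb _ (subset_convexHull ℝ _ (Set.mem_range_self j))
    have hvne : v ≠ 0 := by
      intro hv0
      have := hvy (g j0)
      rw [hv0] at this
      simp at this
      have := hfg j0
      linarith
    have hnv : (0:ℝ) < ‖v‖^2 := pow_pos (norm_pos_iff.mpr hvne) 2
    set ε : ℝ := u / ‖v‖^2 with hε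
    have hεpos : 0 < ε := div_pos hu hnv
    have hfeas' : ∀ j, ⟪g j, -(ε • v)⟫ ≤ -(ε * u) := by
      intro j
      rw [inner_neg_right, real_inner_smul_right, real_inner_comm, hvy]
      have := hfg j
      nlinarith
    have hob := hopt (-(ε * u), -(ε • v)) hfeas'
    have hnorm : ‖-(ε • v)‖ = ε * ‖v‖ := by
      rw [norm_neg, norm_smul, Real.norm_eq_abs, abs_of_pos hεpos]
    rw [hnorm] at hob
    simp only [hts] at hob
    have hεv : ε * ‖v‖^2 = u := by
      rw [hε, div_mul_cancel₀ _ hnv.ne']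
    nlinarith [hob, sq_nonneg ε, norm_nonneg v]
  · -- 0 ∈ conv hull → ds = 0
    intro h
    have h1 : ts + (1/2) * ‖ds‖^2 ≤ 0 := by
      have := hopt (0, 0) (fun j => by simp)
      simpa using this
    have h2 : 0 ≤ ts := key h (ts, ds) hfeas
    have h3 : ‖ds‖ = 0 := by nlinarith [sq_nonneg ‖ds‖]
    exact norm_eq_zero.mp h3
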